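/- (Harary's strong structure theorem, switching form.) Let G be a simple graph on a finite vertex set V with an edge sign function σ assigning to each edge a sign in {+1, −1} (symmetrically: σ(u,v) = σ(v,u) for adjacent u, v). Then every cycle of G is positive (the product of the signs of its edges equals +1) if and only if there exists a function ε : V → {+1, −1} such that σ(u,v) = ε(u)·ε(v) for every edge {u,v} of G. -/

import Mathlib

/-- The sign of a walk in a signed graph: the product of the edge signs along it. -/
def walkSign {V : Type*} {G : SimpleGraph V} (σ : V → V → ℤ) {u v : V}
    (w : G.Walk u v) : ℤ :=
  (w.darts.map fun d => σ d.fst d.snd).prod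

section Helpers

variable {V : Type*} {G : SimpleGraph V} (σ : V → V → ℤ)

lemma walkSign_nil {u : V} : walkSign σ (SimpleGraph.Walk.nil : G.Walk u u) = 1 := rfl

lemma walkSign_cons {u v w : V} (h : G.Adj u v) (p : G.Walk v w) :
    walkSign σ (SimpleGraph.Walk.cons h p) = σ u v * walkSign σ p := by
  simp [walkSign]

lemma walkSign_append {u v w : V} (p : G.Walk u v) (q : G.Walk v w) :
    walkSign σ (p.append q) = walkSign σ p * walkSign σ q := by
  simp [walkSign]

lemma walkSign_copy {u v u' v' : V} (p : G.Walk u v) (hu : u = u') (hv : v = v') :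
    walkSign σ (p.copy hu hv) = walkSign σ p := by
  subst hu; subst hv; rfl

lemma walkSign_reverse (hsymm : ∀ u v, G.Adj u v → σ u v = σ v u)
    {u v : V} (p : G.Walk u v) : walkSign σ p.reverse = walkSign σ p := by
  unfold walkSign
  rw [SimpleGraph.Walk.darts_reverse, List.map_reverse, List.prod_reverse, List.map_map]
  congr 1
  apply List.map_congr_left
  intro d hd
  exact (hsymm d.fst d.snd d.adj).symm

lemma walkSign_unit (hsign : ∀ u v, G.Adj u v → σ u v = 1 ∨ σ u v = -1)
    {u v : V} (p : G.Walk u v) : walkSign σ p = 1 ∨ walkSign σ p = -1 := by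
  induction p with
  | nil => left; rfl
  | cons h q ih =>
    rw [walkSign_cons]
    rcases hsign _ _ h with h1 | h1 <;> rcases ih with h2 | h2 <;> rw [h1, h2] <;> simp

lemma walkSign_rotate [DecidableEq V] {u x : V} (w : G.Walk u u) (hx : x ∈ w.support) :
    walkSign σ (w.rotate x hx) = walkSign σ w := by
  conv_rhs => rw [← SimpleGraph.Walk.take_spec w hx]
  rw [SimpleGraph.Walk.rotate, walkSign_append, walkSign_append, mul_comm]

/-- A closed walk visiting its basepoint twice (beyond the start) splits into two
strictly shorter closed walks whose signs multiply. -/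
lemma exists_two_shorter [DecidableEq V] {x : V} (w : G.Walk x x)
    (hc : 2 ≤ w.support.tail.count x) :
    ∃ (c1 c2 : G.Walk x x), walkSign σ w = walkSign σ c1 * walkSign σ c2 ∧
      c1.length < w.length ∧ c2.length < w.length := by
  cases w with
  | nil => simp at hc
  | @cons _ y _ h2 t2 =>
    have hct : 2 ≤ t2.support.count x := by simpa using hc
    have hxt : x ∈ t2.support := by
      rw [← List.count_pos_iff]; omega
    refine ⟨SimpleGraph.Walk.cons h2 (t2.takeUntil x hxt), t2.dropUntil x hxt, ?_, ?_, ?_⟩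
    · conv_lhs => rw [← SimpleGraph.Walk.take_spec t2 hxt]
      rw [walkSign_cons, walkSign_cons, walkSign_append, mul_assoc]
    all_goals {
      have hlen : (t2.takeUntil x hxt).length + (t2.dropUntil x hxt).length = t2.length := by
        have := congrArg SimpleGraph.Walk.length (SimpleGraph.Walk.take_spec t2 hxt)
        rwa [SimpleGraph.Walk.length_append] at this
      have hdroppos : 0 < (t2.dropUntil x hxt).length := by
        have hsupp : t2.support = (t2.takeUntil x hxt).support ++
            (t2.dropUntil x hxt).support.tail := by
          conv_lhs => rw [← SimpleGraph.Walk.take_spec t2 hxt]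
          exact SimpleGraph.Walk.support_append _ _
        have hc1 : (t2.takeUntil x hxt).support.count x = 1 :=
          SimpleGraph.Walk.count_support_takeUntil_eq_one t2 hxt
        have hcd : 1 ≤ ((t2.dropUntil x hxt).support.tail).count x := by
          rw [hsupp, List.count_append, hc1] at hct; omega
        have hmem : x ∈ (t2.dropUntil x hxt).support.tail := by
          rw [← List.count_pos_iff]; omega
        have := List.length_pos_of_mem hmem
        have hst : (t2.dropUntil x hxt).support.tail.length =
            (t2.dropUntil x hxt).length := by
          have := SimpleGraph.Walk.length_support (t2.dropUntil x hxt)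
          simp [List.length_tail, this]
        omega
      simp only [SimpleGraph.Walk.length_cons]
      omega
    }

/-- Every closed walk in a signed graph whose cycles are all positive has sign `1`. -/
lemma closed_walk_sign (hsymm : ∀ u v, G.Adj u v → σ u v = σ v u)
    (hsign : ∀ u v, G.Adj u v → σ u v = 1 ∨ σ u v = -1)
    (hcyc : ∀ (u : V) (w : G.Walk u u), w.IsCycle → walkSign σ w = 1) :
    ∀ (n : ℕ) (u : V) (w : G.Walk u u), w.length ≤ n → walkSign σ w = 1 := by
  classical
  intro n
  induction n with
  | zero =>
    intro u w hw
    cases w with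
    | nil => rfl
    | cons h t => simp at hw
  | succ n ih =>
    intro u w hw
    by_cases hdup : w.support.tail.Nodup
    · cases w with
      | nil => rfl
      | @cons _ v _ h t =>
        have hts : t.support.Nodup := by simpa using hdup
        have htp : t.IsPath := SimpleGraph.Walk.IsPath.mk' hts
        by_cases he : s(u, v) ∈ t.edges
        · cases t with
          | nil => exact absurd h (G.irrefl)
          | @cons _ z _ h' t' =>
            have hedge : s(u, v) = s(v, z) ∨ s(u, v) ∈ t'.edges := by
              simpa using he
            rcases hedge with h1 | h2
            · have hz : z = u := by
                rw [Sym2.eq_iff] at h1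
                rcases h1 with ⟨ha, hb⟩ | ⟨ha, hb⟩
                · exact absurd ha h.ne
                · exact ha.symm
              subst hz
              have ht' : t' = SimpleGraph.Walk.nil := by
                have : t'.IsPath := htp.of_cons
                rwa [SimpleGraph.Walk.isPath_iff_eq_nil] at this
              subst ht'
              rw [walkSign_cons, walkSign_cons, walkSign_nil,
                ← hsymm _ _ h, mul_one]
              rcases hsign _ _ h with h1 | h1 <;> rw [h1] <;> norm_num
            · exfalso
              have hv : v ∈ t'.support := by
                apply SimpleGraph.Walk.snd_mem_support_of_mem_edges t' h2
              have : v ∉ t'.support := by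
                have := hts
                simp only [SimpleGraph.Walk.support_cons, List.nodup_cons] at this
                exact fun hc => this.1 (by simp [hc])
              exact this hv
        · exact hcyc u (SimpleGraph.Walk.cons h t)
            ((SimpleGraph.Walk.cons_isCycle_iff t h).2 ⟨htp, he⟩)
    · obtain ⟨x, hx⟩ := List.exists_duplicate_iff_not_nodup.2 hdup
      rw [List.duplicate_iff_two_le_count] at hx
      have hxs : x ∈ w.support := by
        have : x ∈ w.support.tail := by rw [← List.count_pos_iff]; omega
        exact List.mem_of_mem_tail this
      have hrc : 2 ≤ (w.rotate x hxs).support.tail.count x := by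
        rw [(SimpleGraph.Walk.support_rotate w x hxs).perm.count_eq]; exact hx
      have hrl : (w.rotate x hxs).length = w.length := by
        rw [SimpleGraph.Walk.rotate, SimpleGraph.Walk.length_append]
        have := congrArg SimpleGraph.Walk.length (SimpleGraph.Walk.take_spec w hxs)
        rw [SimpleGraph.Walk.length_append] at this
        omega
      obtain ⟨c1, c2, hsp, hl1, hl2⟩ := exists_two_shorter σ (w.rotate x hxs) hrc
      rw [← walkSign_rotate σ w hxs, hsp, ih x c1 (by omega), ih x c2 (by omega), mul_one]

end Helpers

/-- Harary's strong structure theorem (switching form): every cycle of a signed graph is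
positive iff there is a switching function `ε : V → {±1}` with `σ(u,v) = ε(u)·ε(v)`
for every edge. -/
theorem harary_strong_structure_switching {V : Type*} [Fintype V]
    (G : SimpleGraph V) (σ : V → V → ℤ)
    (hsymm : ∀ u v, G.Adj u v → σ u v = σ v u)
    (hsign : ∀ u v, G.Adj u v → σ u v = 1 ∨ σ u v = -1) :
    (∀ (u : V) (w : G.Walk u u), w.IsCycle → walkSign σ w = 1) ↔
      ∃ ε : V → ℤ, (∀ v, ε v = 1 ∨ ε v = -1) ∧
        ∀ u v, G.Adj u v → σ u v = ε u * ε v := by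
  classical
  constructor
  · intro hcyc
    set rep : V → V := fun v => (G.connectedComponentMk v).out with hrep
    have hreach : ∀ v, G.Reachable (rep v) v := by
      intro v
      exact SimpleGraph.ConnectedComponent.eq.mp ((G.connectedComponentMk v).out_eq)
    set wv : ∀ v, G.Walk (rep v) v := fun v => (hreach v).some with hwv
    refine ⟨fun v => walkSign σ (wv v), fun v => walkSign_unit σ hsign _, ?_⟩
    intro u v h
    have hruv : rep v = rep u := by
      have : G.connectedComponentMk v = G.connectedComponentMk u :=
        SimpleGraph.ConnectedComponent.eq.mpr h.symm.reachable
      simp only [hrep, this]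
    set c : G.Walk (rep u) (rep u) :=
      (wv u).append ((SimpleGraph.Walk.cons h (wv v).reverse).copy rfl hruv) with hc
    have hone : walkSign σ c = 1 :=
      closed_walk_sign σ hsymm hsign hcyc c.length (rep u) c le_rfl
    rw [hc, walkSign_append, walkSign_copy, walkSign_cons,
      walkSign_reverse σ hsymm] at hone
    show σ u v = walkSign σ (wv u) * walkSign σ (wv v)
    rcases walkSign_unit σ hsign (wv u) with h1 | h1 <;>
      rcases walkSign_unit σ hsign (wv v) with h2 | h2 <;>
      rcases hsign u v h with h3 | h3 <;>
      rw [h1, h2, h3] at hone ⊢ <;> omega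
  · rintro ⟨ε, hunit, hσ⟩
    have htel : ∀ (a b : V) (p : G.Walk a b), walkSign σ p = ε a * ε b := by
      intro a b p
      induction p with
      | nil =>
        rename_i c
        rcases hunit c with h1 | h1 <;> rw [walkSign_nil, h1] <;> norm_num
      | @cons a' b' c' h q ih =>
        rw [walkSign_cons, ih, hσ _ _ h]
        rcases hunit b' with h1 | h1 <;> rw [h1] <;> ring
    intro u w _
    rw [htel u u w]
    rcases hunit u with h1 | h1 <;> rw [h1] <;> norm_num
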